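/- Let M = ⊕_{k} M^{(k)} be a ℤ-graded vector space such that each M^{(k)} is finite-dimensional and M^{(k)} = 0 for k sufficiently large (grading bounded above). Let a, b be operators with a : M^{(k)} → M^{(k+c)} and b : M^{(k)} → M^{(k-c)} where c > 0. Then as formal Laurent series in y^{-1}: tr_M(a b y^{h₀}) = (1/(1-y^{-c})) tr_M([a,b] y^{h₀}), where 1/(1-y^{-c}) denotes the geometric series ∑_{m≥0} y^{-mc} and tr_M(X y^{h₀}) = ∑_k tr_{M^{(k)}}(X) y^k. -/

import Mathlib

/-- Graded trace identity: for `M = ⊕_k M^{(k)}` with finite-dimensional pieces, grading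
bounded above, and operators `a`, `b` shifting the grading by `+c` and `-c` with `c > 0`,
the coefficient of `y^k` in `tr_M(a b y^{h₀}) = (1/(1-y^{-c}))·tr_M([a,b] y^{h₀})`, namely:
`tr_{M^{(k)}}(ab) = ∑_{m≥0} tr_{M^{(k+mc)}}([a,b])`. -/
theorem stmt4 {M : Type*} [AddCommGroup M] [Module ℂ M]
    (D : ℤ → Submodule ℂ M) [∀ k, FiniteDimensional ℂ (D k)]
    (K₀ : ℤ) (hbd : ∀ k : ℤ, K₀ < k → D k = ⊥)
    (c : ℤ) (hc : 0 < c)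
    (a b : Module.End ℂ M)
    (ha : ∀ k : ℤ, ∀ x ∈ D k, a x ∈ D (k + c))
    (hb : ∀ k : ℤ, ∀ x ∈ D k, b x ∈ D (k - c))
    (hab : ∀ k : ℤ, ∀ x ∈ D k, (a * b) x ∈ D k)
    (hcm : ∀ k : ℤ, ∀ x ∈ D k, (a * b - b * a) x ∈ D k)
    (k : ℤ) :
    LinearMap.trace ℂ (D k) ((a * b).restrict (hab k)) =
      ∑' m : ℕ,
        LinearMap.trace ℂ (D (k + (m : ℤ) * c))
          ((a * b - b * a).restrict (hcm (k + (m : ℤ) * c))) := by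
  classical
  -- trace over a piece above K₀ vanishes
  have hzero : ∀ (j : ℤ), K₀ < j → ∀ (f : Module.End ℂ M)
      (hf : ∀ x ∈ D j, f x ∈ D j),
      LinearMap.trace ℂ (D j) (f.restrict hf) = 0 := by
    intro j hj f hf
    have hsub : Subsingleton (D j) := by rw [hbd j hj]; infer_instance
    rw [Subsingleton.elim (f.restrict hf) 0, map_zero]
  -- trace is invariant under rewriting the index
  have hcast : ∀ (j j' : ℤ), j = j' → ∀ (f : Module.End ℂ M)
      (hf : ∀ x ∈ D j, f x ∈ D j) (hf' : ∀ x ∈ D j', f x ∈ D j'),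
      LinearMap.trace ℂ (D j) (f.restrict hf)
        = LinearMap.trace ℂ (D j') (f.restrict hf') := by
    intro j j' h f hf hf'; subst h; rfl
  have hba : ∀ j : ℤ, ∀ x ∈ D j, (b * a) x ∈ D j := by
    intro j x hx
    have h1 := hb (j + c) (a x) (ha j x hx)
    simpa [Module.End.mul_apply, add_sub_cancel_right] using h1
  -- key: tr_{D j}(ba) = tr_{D (j+c)}(ab)
  have hkey : ∀ j : ℤ,
      LinearMap.trace ℂ (D j) ((b * a).restrict (hba j))
        = LinearMap.trace ℂ (D (j + c)) ((a * b).restrict (hab (j + c))) := by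
    intro j
    have haj : ∀ x ∈ D j, a x ∈ D (j + c) := ha j
    have hbj : ∀ x ∈ D (j + c), b x ∈ D j := by
      intro x hx
      simpa [add_sub_cancel_right] using hb (j + c) x hx
    set A : D j →ₗ[ℂ] D (j + c) := a.restrict haj with hA
    set B : D (j + c) →ₗ[ℂ] D j := b.restrict hbj with hB
    have h1 : (b * a).restrict (hba j) = B ∘ₗ A := by
      ext x; rfl
    have h2 : (a * b).restrict (hab (j + c)) = A ∘ₗ B := by
      ext x; rfl
    rw [h1, h2, LinearMap.trace_comp_comm']
  set F : ℕ → ℂ := fun m =>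
    LinearMap.trace ℂ (D (k + (m : ℤ) * c)) ((a * b).restrict (hab (k + (m : ℤ) * c)))
    with hF
  set G : ℕ → ℂ := fun m =>
    LinearMap.trace ℂ (D (k + (m : ℤ) * c))
      ((a * b - b * a).restrict (hcm (k + (m : ℤ) * c))) with hG
  -- step relation
  have hstep : ∀ m : ℕ, F m = G m + F (m + 1) := by
    intro m
    set j : ℤ := k + (m : ℤ) * c with hj
    have hsplit : (a * b - b * a).restrict (hcm j)
        = (a * b).restrict (hab j) - (b * a).restrict (hba j) := by
      ext x; rfl
    have hGm : G m = F m - LinearMap.trace ℂ (D j) ((b * a).restrict (hba j)) := by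
      simp only [hG, hF, ← hj, hsplit, map_sub]
      rfl
    have hFn : LinearMap.trace ℂ (D j) ((b * a).restrict (hba j)) = F (m + 1) := by
      rw [hkey j]
      exact hcast (j + c) (k + ((m : ℤ) + 1) * c) (by push_cast [hj]; ring) _ _ _
    rw [hGm, hFn]; ring
  -- telescoping
  have htel : ∀ n : ℕ, F 0 = (∑ m ∈ Finset.range n, G m) + F n := by
    intro n
    induction n with
    | zero => simp
    | succ n ih =>
      rw [ih, Finset.sum_range_succ, hstep n]; ring
  -- vanishing bound
  set N₀ : ℕ := (K₀ - k).toNat + 1 with hN₀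
  have hbig : ∀ m : ℕ, N₀ ≤ m → K₀ < k + (m : ℤ) * c := by
    intro m hm
    have h1 : (m : ℤ) ≤ (m : ℤ) * c := le_mul_of_one_le_right (by positivity) hc
    have h2 : K₀ - k < (N₀ : ℤ) := by
      rw [hN₀]; push_cast
      have := Int.self_le_toNat (K₀ - k)
      omega
    have h3 : (N₀ : ℤ) ≤ (m : ℤ) := by exact_mod_cast hm
    omega
  have hFzero : F N₀ = 0 := hzero _ (hbig N₀ le_rfl) _ _
  have hGzero : ∀ m ∉ Finset.range N₀, G m = 0 := by
    intro m hm
    exact hzero _ (hbig m (by simpa using hm)) _ _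
  have htsum : ∑' m : ℕ, G m = ∑ m ∈ Finset.range N₀, G m := tsum_eq_sum hGzero
  have hL : LinearMap.trace ℂ (D k) ((a * b).restrict (hab k)) = F 0 :=
    hcast k (k + (0 : ℤ) * c) (by ring) _ _ _
  calc LinearMap.trace ℂ (D k) ((a * b).restrict (hab k))
      = F 0 := hL
    _ = (∑ m ∈ Finset.range N₀, G m) + F N₀ := htel N₀
    _ = ∑' m : ℕ, G m := by rw [hFzero, htsum, add_zero]
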